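/- A bipartite graph is outerplanar if and only if it contains no subdivision of K_{2,3}. -/

import Mathlib

/-- `G.HasSubdivision H plen` means `G` contains a subdivision of `H` in which the path
replacing each edge of `H` has length satisfying `plen`: there is an injection `f` of the
vertices of `H` (branch vertices) into `G`, and for each edge of `H` a path in `G` between the
corresponding branch vertices, such that no branch vertex is an internal vertex of any such
path and paths corresponding to distinct edges meet only in branch vertices. -/
def SimpleGraph.HasSubdivision {V W : Type*} (G : SimpleGraph V) (H : SimpleGraph W)
    (plen : ℕ → Prop) : Prop :=
  ∃ f : W → V, Function.Injective f ∧
    ∃ p : ∀ a b, H.Adj a b → G.Walk (f a) (f b),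
      (∀ a b (h : H.Adj a b), (p a b h).IsPath) ∧
      (∀ a b (h : H.Adj a b), plen (p a b h).length) ∧
      (∀ a b (h : H.Adj a b) (w : W), f w ∈ (p a b h).support → w = a ∨ w = b) ∧
      (∀ a b a' b' (h : H.Adj a b) (h' : H.Adj a' b'), s(a, b) ≠ s(a', b') →
        ∀ x, x ∈ (p a b h).support → x ∈ (p a' b' h').support →
          (x = f a ∨ x = f b) ∧ (x = f a' ∨ x = f b'))

/-- `G` contains a subdivision of `H`. -/
def SimpleGraph.ContainsSubdivision {V W : Type*} (G : SimpleGraph V) (H : SimpleGraph W) :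
    Prop :=
  G.HasSubdivision H fun _ => True

/-- `G` contains an even subdivision of `H`, i.e. a subdivision in which every edge of `H`
is subdivided an even number of times (so the replacing paths have odd length). -/
def SimpleGraph.ContainsEvenSubdivision {V W : Type*} (G : SimpleGraph V) (H : SimpleGraph W) :
    Prop :=
  G.HasSubdivision H fun n => Odd n

/-- Planarity, via Kuratowski's characterization: no subdivision of `K₅` or `K₃,₃`. -/
def SimpleGraph.KuratowskiPlanar {V : Type*} (G : SimpleGraph V) : Prop :=
  ¬ G.ContainsSubdivision (completeGraph (Fin 5)) ∧
    ¬ G.ContainsSubdivision (completeBipartiteGraph (Fin 3) (Fin 3))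

/-- Outerplanarity, via the characterization by forbidden subdivisions of `K₄` and `K₂,₃`. -/
def SimpleGraph.Outerplanar {V : Type*} (G : SimpleGraph V) : Prop :=
  ¬ G.ContainsSubdivision (completeGraph (Fin 4)) ∧
    ¬ G.ContainsSubdivision (completeBipartiteGraph (Fin 2) (Fin 3))

section Aux

private lemma inj5 {V : Type*} {A B C D E : V} (h1 : A ≠ B) (h2 : A ≠ C) (h3 : A ≠ D)
    (h4 : A ≠ E) (h5 : B ≠ C) (h6 : B ≠ D) (h7 : B ≠ E) (h8 : C ≠ D) (h9 : C ≠ E)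
    (h10 : D ≠ E) : Function.Injective (Sum.elim ![A, B] ![C, D, E]) := by
  rintro (u|u) (v|v) h <;> fin_cases u <;> fin_cases v <;> simp_all


open SimpleGraph

private lemma no2 {p q : Prop} (hp : ¬p) (hq : ¬q) : ¬(p ∨ q) := fun h => h.elim hp hq

private lemma mem_rev {V : Type*} {G : SimpleGraph V} {u v : V} {y : V} {q : G.Walk u v}
    (h : y ∈ q.reverse.support) : y ∈ q.support := by
  rwa [SimpleGraph.Walk.support_reverse, List.mem_reverse] at h

private lemma exists_internal {V : Type*} {G : SimpleGraph V} {u v : V} (w : G.Walk u v)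
    (hw : w.IsPath) (h2 : 2 ≤ w.length) : ∃ x, x ∈ w.support ∧ x ≠ u ∧ x ≠ v := by
  cases w with
  | nil => simp at h2
  | cons hadj w' =>
    rename_i m
    have hw2 := (SimpleGraph.Walk.cons_isPath_iff hadj w').mp hw
    refine ⟨m, ?_, ?_, ?_⟩
    · rw [SimpleGraph.Walk.support_cons]
      exact List.mem_cons_of_mem _ w'.start_mem_support
    · intro h
      exact hw2.2 (h ▸ w'.start_mem_support)
    · intro h
      subst h
      obtain rfl := (SimpleGraph.Walk.isPath_iff_eq_nil).mp hw2.1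
      simp at h2

private lemma key {V : Type*} {G : SimpleGraph V} (L : Fin 2 → V) (R : Fin 3 → V)
    (hinj : Function.Injective (Sum.elim L R : Fin 2 ⊕ Fin 3 → V))
    (P : ∀ i j, G.Walk (L i) (R j))
    (hpath : ∀ i j, (P i j).IsPath)
    (hL : ∀ i j i', L i' ∈ (P i j).support → i' = i)
    (hR : ∀ i j j', R j' ∈ (P i j).support → j' = j)
    (hdisj : ∀ i j i' j', (i, j) ≠ (i', j') → ∀ y, y ∈ (P i j).support → y ∈ (P i' j').support →
      (y = L i ∨ y = R j) ∧ (y = L i' ∨ y = R j')) :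
    G.ContainsSubdivision (completeBipartiteGraph (Fin 2) (Fin 3)) := by
  refine ⟨Sum.elim L R, hinj,
    fun u v huv =>
      match u, v, huv with
      | .inl i, .inr j, _ => P i j
      | .inr j, .inl i, _ => (P i j).reverse
      | .inl _, .inl _, h => by simp at h
      | .inr _, .inr _, h => by simp at h, ?_, fun _ _ _ => trivial, ?_, ?_⟩
  · rintro (i|i) (j|j) h
    · simp at h
    · exact hpath i j
    · exact (hpath j i).reverse
    · simp at h
  · rintro (i|i) (j|j) h
    · simp at h
    · rintro (w|w) hw <;> dsimp only [Sum.elim_inl, Sum.elim_inr] at hw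
      · exact Or.inl (congrArg Sum.inl (hL i j w hw))
      · exact Or.inr (congrArg Sum.inr (hR i j w hw))
    · rintro (w|w) hw <;>
        simp only [Walk.support_reverse, List.mem_reverse, Sum.elim_inl, Sum.elim_inr] at hw
      · exact Or.inr (congrArg Sum.inl (hL j i w hw))
      · exact Or.inl (congrArg Sum.inr (hR j i w hw))
    · simp at h
  · rintro (a|a) (b|b) (c|c) (d|d) h h' hne y hy hy'
    · simp at h
    · simp at h
    · simp at h
    · simp at h
    · simp at h'
    · simp only [Walk.support_reverse, List.mem_reverse, Sum.elim_inl, Sum.elim_inr] at hy hy' ⊢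
      refine hdisj a b c d ?_ y hy hy'
      rintro ⟨⟩
      exact hne rfl
    · simp only [Walk.support_reverse, List.mem_reverse, Sum.elim_inl, Sum.elim_inr] at hy hy' ⊢
      have := hdisj a b d c ?_ y hy hy'
      · exact ⟨this.1, this.2.symm⟩
      · rintro ⟨⟩
        exact hne (by rw [Sym2.eq_swap])
    · simp at h'
    · simp at h'
    · simp only [Walk.support_reverse, List.mem_reverse, Sum.elim_inl, Sum.elim_inr] at hy hy' ⊢
      have := hdisj b a c d ?_ y hy hy'
      · exact ⟨this.1.symm, this.2⟩
      · rintro ⟨⟩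
        exact hne (by rw [Sym2.eq_swap])
    · simp only [Walk.support_reverse, List.mem_reverse, Sum.elim_inl, Sum.elim_inr] at hy hy' ⊢
      have := hdisj b a d c ?_ y hy hy'
      · exact ⟨this.1.symm, this.2.symm⟩
      · rintro ⟨⟩
        exact hne rfl
    · simp at h'
    · simp at h
    · simp at h
    · simp at h
    · simp at h

end Aux

theorem stmt_18 {V : Type*} (G : SimpleGraph V) (hbip : G.Colorable 2) :
    G.Outerplanar ↔ ¬ G.ContainsSubdivision (completeBipartiteGraph (Fin 2) (Fin 3)) := by
  classical
  refine ⟨fun h => h.2, fun h23 => ⟨fun h4 => h23 ?_, h23⟩⟩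
  obtain ⟨f, hf, p, hpth, -, hbr, hdj⟩ := h4
  by_cases hlen : ∀ a b (hab : (SimpleGraph.completeGraph (Fin 4)).Adj a b), (p a b hab).length = 1
  · exfalso
    obtain ⟨C⟩ := hbip
    have adj : ∀ a b : Fin 4, a ≠ b → G.Adj (f a) (f b) := fun a b hab =>
      SimpleGraph.Walk.adj_of_length_eq_one (hlen a b hab)
    exact (by decide : ∀ x y z : Fin 2, x ≠ y → x ≠ z → y ≠ z → False) _ _ _
      (C.valid (adj 0 1 (by decide))) (C.valid (adj 0 2 (by decide)))
      (C.valid (adj 1 2 (by decide)))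
  · push_neg at hlen
    obtain ⟨a, b, hab, hne1⟩ := hlen
    have hab' : a ≠ b := hab
    obtain ⟨c, d, hcd, hca, hcb, hda, hdb⟩ :=
      (by decide :
        ∀ a b : Fin 4, a ≠ b → ∃ c d : Fin 4, c ≠ d ∧ c ≠ a ∧ c ≠ b ∧ d ≠ a ∧ d ≠ b) a b hab'
    have hw : (p a b hab).IsPath := hpth a b hab
    have h0 : (p a b hab).length ≠ 0 := fun h =>
      hab' (hf (SimpleGraph.Walk.eq_of_length_eq_zero h))
    have hlen2 : 2 ≤ (p a b hab).length := by omega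
    obtain ⟨x, hx, hxa, hxb⟩ := exists_internal (p a b hab) hw hlen2
    have hq1 : ((p a b hab).takeUntil x hx).IsPath := hw.takeUntil hx
    have hq2 : ((p a b hab).dropUntil x hx).IsPath := hw.dropUntil hx
    have hsup : (p a b hab).support
        = ((p a b hab).takeUntil x hx).support ++ ((p a b hab).dropUntil x hx).support.tail := by
      conv_lhs => rw [← SimpleGraph.Walk.take_spec (p a b hab) hx]
      exact SimpleGraph.Walk.support_append _ _
    have hnd := hw.support_nodup
    rw [hsup] at hnd
    have hdisj12 := List.disjoint_of_nodup_append hnd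
    have hq2cons := SimpleGraph.Walk.support_eq_cons ((p a b hab).dropUntil x hx)
    have hsub1 := SimpleGraph.Walk.support_takeUntil_subset (p a b hab) hx
    have hsub2 := SimpleGraph.Walk.support_dropUntil_subset (p a b hab) hx
    have hfb_tail : f b ∈ ((p a b hab).dropUntil x hx).support.tail := by
      have hmem := SimpleGraph.Walk.end_mem_support ((p a b hab).dropUntil x hx)
      rw [hq2cons] at hmem
      rcases List.mem_cons.mp hmem with h | h
      · exact absurd h.symm hxb
      · exact h
    have hfb_q1 : f b ∉ ((p a b hab).takeUntil x hx).support := fun h => hdisj12 h hfb_tail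
    have hfa_q2 : f a ∉ ((p a b hab).dropUntil x hx).support := by
      intro h
      rw [hq2cons] at h
      rcases List.mem_cons.mp h with h | h
      · exact hxa h.symm
      · exact hdisj12 ((p a b hab).takeUntil x hx).start_mem_support h
    have hfc_w : f c ∉ (p a b hab).support := by
      intro h
      exact no2 hca hcb (hbr a b hab c h)
    have hfd_w : f d ∉ (p a b hab).support := by
      intro h
      exact no2 hda hdb (hbr a b hab d h)
    have hx_not : ∀ u v (huv : (SimpleGraph.completeGraph (Fin 4)).Adj u v), s(a,b) ≠ s(u,v) →
        x ∉ (p u v huv).support := by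
      intro u v huv hsne hmem
      rcases (hdj a b u v hab huv hsne x hx hmem).1 with h | h
      exacts [hxa h, hxb h]
    have seg1 : ∀ u v (huv : (SimpleGraph.completeGraph (Fin 4)).Adj u v), s(a,b) ≠ s(u,v) →
        ∀ y, y ∈ ((p a b hab).takeUntil x hx).support →
        y ∈ (p u v huv).support → y = f a ∧ (y = f u ∨ y = f v) := by
      intro u v huv hsne y hy1 hy2
      have h12 := hdj a b u v hab huv hsne y (hsub1 hy1) hy2
      rcases h12.1 with h | h
      · exact ⟨h, h12.2⟩
      · exact absurd (h ▸ hy1) hfb_q1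
    have seg2 : ∀ u v (huv : (SimpleGraph.completeGraph (Fin 4)).Adj u v), s(a,b) ≠ s(u,v) →
        ∀ y, y ∈ ((p a b hab).dropUntil x hx).support →
        y ∈ (p u v huv).support → y = f b ∧ (y = f u ∨ y = f v) := by
      intro u v huv hsne y hy1 hy2
      have h12 := hdj a b u v hab huv hsne y (hsub2 hy1) hy2
      rcases h12.1 with h | h
      · exact absurd (h ▸ hy1) hfa_q2
      · exact ⟨h, h12.2⟩
    have seg12 : ∀ y, y ∈ ((p a b hab).takeUntil x hx).support →
        y ∈ ((p a b hab).dropUntil x hx).support → y = x := by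
      intro y h1 h2
      rw [hq2cons] at h2
      rcases List.mem_cons.mp h2 with h | h
      · exact h
      · exact absurd h (hdisj12 h1)
    have sym2ne : ∀ {u v u' v' : Fin 4}, (u = u' → v ≠ v') → (u = v' → v ≠ u') →
        s(u,v) ≠ s(u',v') := by
      intro u v u' v' h1 h2 h
      rcases Sym2.eq_iff.mp h with ⟨rfl, rfl⟩ | ⟨rfl, rfl⟩
      exacts [h1 rfl rfl, h2 rfl rfl]
    have sab_ac : s(a,b) ≠ s(a,c) := sym2ne (fun _ => hcb.symm) (fun h => absurd h hca.symm)
    have sab_ad : s(a,b) ≠ s(a,d) := sym2ne (fun _ => hdb.symm) (fun h => absurd h hda.symm)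
    have sab_bc : s(a,b) ≠ s(b,c) := sym2ne (fun h => absurd h hab') (fun h => absurd h hca.symm)
    have sab_bd : s(a,b) ≠ s(b,d) := sym2ne (fun h => absurd h hab') (fun h => absurd h hda.symm)
    have sac_ad : s(a,c) ≠ s(a,d) := sym2ne (fun _ => hcd) (fun h => absurd h hda.symm)
    have sac_bc : s(a,c) ≠ s(b,c) := sym2ne (fun h => absurd h hab') (fun h => absurd h hca.symm)
    have sac_bd : s(a,c) ≠ s(b,d) := sym2ne (fun h => absurd h hab') (fun h => absurd h hda.symm)
    have sad_bc : s(a,d) ≠ s(b,c) := sym2ne (fun h => absurd h hab') (fun h => absurd h hca.symm)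
    have sad_bd : s(a,d) ≠ s(b,d) := sym2ne (fun h => absurd h hab') (fun h => absurd h hda.symm)
    have sbc_bd : s(b,c) ≠ s(b,d) := sym2ne (fun _ => hcd) (fun h => absurd h hdb.symm)
    have hac : (SimpleGraph.completeGraph (Fin 4)).Adj a c := hca.symm
    have had : (SimpleGraph.completeGraph (Fin 4)).Adj a d := hda.symm
    have hbc : (SimpleGraph.completeGraph (Fin 4)).Adj b c := hcb.symm
    have hbd : (SimpleGraph.completeGraph (Fin 4)).Adj b d := hdb.symm
    have hxc : x ≠ f c := fun h => hfc_w (h ▸ hx)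
    have hxd : x ≠ f d := fun h => hfd_w (h ▸ hx)
    have fab : f a ≠ f b := fun h => hab' (hf h)
    have fac : f a ≠ f c := fun h => hca (hf h.symm)
    have fad : f a ≠ f d := fun h => hda (hf h.symm)
    have fbc : f b ≠ f c := fun h => hcb (hf h.symm)
    have fbd : f b ≠ f d := fun h => hdb (hf h.symm)
    have fcd : f c ≠ f d := fun h => hcd (hf h)
    refine key (![f a, f b]) (![f c, f d, x]) ?_
      (fun i j =>
        match (motive := ∀ (i : Fin 2) (j : Fin 3), G.Walk (![f a, f b] i) (![f c, f d, x] j))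
            i, j with
        | ⟨0,_⟩, ⟨0,_⟩ => p a c hac
        | ⟨0,_⟩, ⟨1,_⟩ => p a d had
        | ⟨0,_⟩, ⟨2,_⟩ => (p a b hab).takeUntil x hx
        | ⟨1,_⟩, ⟨0,_⟩ => p b c hbc
        | ⟨1,_⟩, ⟨1,_⟩ => p b d hbd
        | ⟨1,_⟩, ⟨2,_⟩ => ((p a b hab).dropUntil x hx).reverse) ?_ ?_ ?_ ?_
    · -- injectivity
      exact inj5 fab fac fad hxa.symm fbc fbd hxb.symm fcd hxc.symm hxd.symm
    · -- paths
      intro i j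
      fin_cases i <;> fin_cases j
      · exact hpth a c hac
      · exact hpth a d had
      · exact hq1
      · exact hpth b c hbc
      · exact hpth b d hbd
      · exact hq2.reverse
    · -- hL
      intro i j i'
      fin_cases i <;> fin_cases j <;> fin_cases i'
      · exact fun _ => rfl
      · exact fun h => absurd (hbr a c hac b h) (no2 hab'.symm hcb.symm)
      · exact fun _ => rfl
      · exact fun h => absurd (hbr a d had b h) (no2 hab'.symm hdb.symm)
      · exact fun _ => rfl
      · exact fun h => absurd h hfb_q1
      · exact fun h => absurd (hbr b c hbc a h) (no2 hab' hca.symm)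
      · exact fun _ => rfl
      · exact fun h => absurd (hbr b d hbd a h) (no2 hab' hda.symm)
      · exact fun _ => rfl
      · exact fun h => absurd (mem_rev h) hfa_q2
      · exact fun _ => rfl
    · -- hR
      intro i j j'
      fin_cases i <;> fin_cases j <;> fin_cases j'
      · exact fun _ => rfl
      · exact fun h => absurd (hbr a c hac d h) (no2 hda hcd.symm)
      · exact fun h => absurd h (hx_not a c hac sab_ac)
      · exact fun h => absurd (hbr a d had c h) (no2 hca hcd)
      · exact fun _ => rfl
      · exact fun h => absurd h (hx_not a d had sab_ad)
      · exact fun h => absurd (hsub1 h) hfc_w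
      · exact fun h => absurd (hsub1 h) hfd_w
      · exact fun _ => rfl
      · exact fun _ => rfl
      · exact fun h => absurd (hbr b c hbc d h) (no2 hdb hcd.symm)
      · exact fun h => absurd h (hx_not b c hbc sab_bc)
      · exact fun h => absurd (hbr b d hbd c h) (no2 hcb hcd)
      · exact fun _ => rfl
      · exact fun h => absurd h (hx_not b d hbd sab_bd)
      · exact fun h => absurd (hsub2 (mem_rev h)) hfc_w
      · exact fun h => absurd (hsub2 (mem_rev h)) hfd_w
      · exact fun _ => rfl
    · -- hdisj
      intro i j i' j'
      fin_cases i <;> fin_cases j <;> fin_cases i' <;> fin_cases j' <;>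
        intro hne y hy hy'
      -- (0,0) vs *
      · exact absurd rfl hne
      · exact hdj a c a d hac had sac_ad y hy hy'
      · obtain ⟨h1, h2⟩ := seg1 a c hac sab_ac y hy' hy
        exact ⟨h2, Or.inl h1⟩
      · exact hdj a c b c hac hbc sac_bc y hy hy'
      · exact hdj a c b d hac hbd sac_bd y hy hy'
      · obtain ⟨h1, h2⟩ := seg2 a c hac sab_ac y (mem_rev hy') hy
        exact ⟨h2, Or.inl h1⟩
      -- (0,1) vs *
      · exact hdj a d a c had hac sac_ad.symm y hy hy'
      · exact absurd rfl hne
      · obtain ⟨h1, h2⟩ := seg1 a d had sab_ad y hy' hy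
        exact ⟨h2, Or.inl h1⟩
      · exact hdj a d b c had hbc sad_bc y hy hy'
      · exact hdj a d b d had hbd sad_bd y hy hy'
      · obtain ⟨h1, h2⟩ := seg2 a d had sab_ad y (mem_rev hy') hy
        exact ⟨h2, Or.inl h1⟩
      -- (0,2) vs *
      · obtain ⟨h1, h2⟩ := seg1 a c hac sab_ac y hy hy'
        exact ⟨Or.inl h1, h2⟩
      · obtain ⟨h1, h2⟩ := seg1 a d had sab_ad y hy hy'
        exact ⟨Or.inl h1, h2⟩
      · exact absurd rfl hne
      · obtain ⟨h1, h2⟩ := seg1 b c hbc sab_bc y hy hy'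
        exact ⟨Or.inl h1, h2⟩
      · obtain ⟨h1, h2⟩ := seg1 b d hbd sab_bd y hy hy'
        exact ⟨Or.inl h1, h2⟩
      · have hxy := seg12 y hy (mem_rev hy')
        exact ⟨Or.inr hxy, Or.inr hxy⟩
      -- (1,0) vs *
      · exact hdj b c a c hbc hac sac_bc.symm y hy hy'
      · exact hdj b c a d hbc had sad_bc.symm y hy hy'
      · obtain ⟨h1, h2⟩ := seg1 b c hbc sab_bc y hy' hy
        exact ⟨h2, Or.inl h1⟩
      · exact absurd rfl hne
      · exact hdj b c b d hbc hbd sbc_bd y hy hy'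
      · obtain ⟨h1, h2⟩ := seg2 b c hbc sab_bc y (mem_rev hy') hy
        exact ⟨h2, Or.inl h1⟩
      -- (1,1) vs *
      · exact hdj b d a c hbd hac sac_bd.symm y hy hy'
      · exact hdj b d a d hbd had sad_bd.symm y hy hy'
      · obtain ⟨h1, h2⟩ := seg1 b d hbd sab_bd y hy' hy
        exact ⟨h2, Or.inl h1⟩
      · exact hdj b d b c hbd hbc sbc_bd.symm y hy hy'
      · exact absurd rfl hne
      · obtain ⟨h1, h2⟩ := seg2 b d hbd sab_bd y (mem_rev hy') hy
        exact ⟨h2, Or.inl h1⟩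
      -- (1,2) vs *
      · obtain ⟨h1, h2⟩ := seg2 a c hac sab_ac y (mem_rev hy) hy'
        exact ⟨Or.inl h1, h2⟩
      · obtain ⟨h1, h2⟩ := seg2 a d had sab_ad y (mem_rev hy) hy'
        exact ⟨Or.inl h1, h2⟩
      · have hxy := seg12 y hy' (mem_rev hy)
        exact ⟨Or.inr hxy, Or.inr hxy⟩
      · obtain ⟨h1, h2⟩ := seg2 b c hbc sab_bc y (mem_rev hy) hy'
        exact ⟨Or.inl h1, h2⟩
      · obtain ⟨h1, h2⟩ := seg2 b d hbd sab_bd y (mem_rev hy) hy'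
        exact ⟨Or.inl h1, h2⟩
      · exact absurd rfl hne
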